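/- In the randomized-policy MDP setup, let θ and θ' be randomized policies with stationary distributions π^θ and π^{θ'}, means J^θ_μ and J^{θ'}_μ, combined metrics J^θ_{μ,σ} and J^{θ'}_{μ,σ}, and let g^θ be a performance potential for θ. Then J^{θ'}_{μ,σ} - J^{θ}_{μ,σ} = ∑_i π^{θ'} i * ∑_a (θ' i a - θ i a) * ( ∑_j p a i j * g^θ j + r i a - β*(r i a)^2 + 2*β*J^θ_μ*(r i a) ) + β*(J^{θ'}_μ - J^θ_μ)^2. -/

import Mathlib

/-- Performance difference formula for randomized policies (equation (37)). -/
theorem mean_variance_randomized_policy_difference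
    (S : ℕ) (hS : 1 ≤ S) (A : Type) [Fintype A] [Nonempty A]
    (p : A → Matrix (Fin S) (Fin S) ℝ)
    (hp0 : ∀ a i j, 0 ≤ p a i j) (hp1 : ∀ a i, ∑ j, p a i j = 1)
    (r : Fin S → A → ℝ) (β : ℝ)
    (θ θ' : Fin S → A → ℝ)
    (hθ0 : ∀ i a, 0 ≤ θ i a) (hθ1 : ∀ i, ∑ a, θ i a = 1)
    (hθ'0 : ∀ i a, 0 ≤ θ' i a) (hθ'1 : ∀ i, ∑ a, θ' i a = 1)
    (πθ πθ' : Fin S → ℝ)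
    (hπθ0 : ∀ i, 0 ≤ πθ i) (hπθ1 : ∑ i, πθ i = 1)
    (hπθstat : ∀ j, ∑ i, πθ i * (∑ a, θ i a * p a i j) = πθ j)
    (hπθ'0 : ∀ i, 0 ≤ πθ' i) (hπθ'1 : ∑ i, πθ' i = 1)
    (hπθ'stat : ∀ j, ∑ i, πθ' i * (∑ a, θ' i a * p a i j) = πθ' j)
    (Jmu Jmu' Jms Jms' : ℝ)
    (hJmu : Jmu = ∑ i, πθ i * ∑ a, θ i a * r i a)
    (hJmu' : Jmu' = ∑ i, πθ' i * ∑ a, θ' i a * r i a)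
    (hJms : Jms = ∑ i, πθ i * ∑ a, θ i a * (r i a - β * (r i a - Jmu) ^ 2))
    (hJms' : Jms' = ∑ i, πθ' i * ∑ a, θ' i a * (r i a - β * (r i a - Jmu') ^ 2))
    (g : Fin S → ℝ)
    (hg : ∀ i, g i = (∑ a, θ i a * (r i a - β * (r i a - Jmu) ^ 2)) - Jms
      + ∑ j, (∑ a, θ i a * p a i j) * g j) :
    Jms' - Jms =
      (∑ i, πθ' i * ∑ a, (θ' i a - θ i a) *
        ((∑ j, p a i j * g j) + r i a - β * (r i a) ^ 2 + 2 * β * Jmu * r i a))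
      + β * (Jmu' - Jmu) ^ 2 := by
  classical
  -- B a i : the "comparison" quantity with mean Jmu
  have hswap : ∀ (τ : Fin S → A → ℝ) (i : Fin S),
      (∑ a, τ i a * ∑ j, p a i j * g j) = ∑ j, (∑ a, τ i a * p a i j) * g j := by
    intro τ i
    calc (∑ a, τ i a * ∑ j, p a i j * g j)
        = ∑ a, ∑ j, τ i a * p a i j * g j := by
          refine Finset.sum_congr rfl fun a _ => ?_
          rw [Finset.mul_sum]
          exact Finset.sum_congr rfl fun j _ => by ring
      _ = ∑ j, ∑ a, τ i a * p a i j * g j := Finset.sum_comm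
      _ = ∑ j, (∑ a, τ i a * p a i j) * g j := by
          exact Finset.sum_congr rfl fun j _ => (Finset.sum_mul _ _ _).symm
  -- T1
  have hT1 : (∑ i, πθ' i * ∑ a, θ' i a *
        ((∑ j, p a i j * g j) + r i a - β * (r i a - Jmu) ^ 2))
      = (∑ i, πθ' i * g i)
        + ∑ i, πθ' i * ∑ a, θ' i a * (r i a - β * (r i a - Jmu) ^ 2) := by
    have h1 : ∀ i, (∑ a, θ' i a * ((∑ j, p a i j * g j) + r i a - β * (r i a - Jmu) ^ 2))
        = (∑ j, (∑ a, θ' i a * p a i j) * g j)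
          + ∑ a, θ' i a * (r i a - β * (r i a - Jmu) ^ 2) := by
      intro i
      rw [← hswap θ' i, ← Finset.sum_add_distrib]
      exact Finset.sum_congr rfl fun a _ => by ring
    calc (∑ i, πθ' i * ∑ a, θ' i a *
            ((∑ j, p a i j * g j) + r i a - β * (r i a - Jmu) ^ 2))
        = ∑ i, (πθ' i * ∑ j, (∑ a, θ' i a * p a i j) * g j
            + πθ' i * ∑ a, θ' i a * (r i a - β * (r i a - Jmu) ^ 2)) := by
          refine Finset.sum_congr rfl fun i _ => ?_
          rw [h1 i]; ring
      _ = (∑ i, πθ' i * ∑ j, (∑ a, θ' i a * p a i j) * g j)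
            + ∑ i, πθ' i * ∑ a, θ' i a * (r i a - β * (r i a - Jmu) ^ 2) :=
          Finset.sum_add_distrib
      _ = (∑ i, πθ' i * g i)
            + ∑ i, πθ' i * ∑ a, θ' i a * (r i a - β * (r i a - Jmu) ^ 2) := by
          congr 1
          calc (∑ i, πθ' i * ∑ j, (∑ a, θ' i a * p a i j) * g j)
              = ∑ i, ∑ j, (πθ' i * (∑ a, θ' i a * p a i j)) * g j := by
                refine Finset.sum_congr rfl fun i _ => ?_
                rw [Finset.mul_sum]
                exact Finset.sum_congr rfl fun j _ => by ring
            _ = ∑ j, ∑ i, (πθ' i * (∑ a, θ' i a * p a i j)) * g j := Finset.sum_comm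
            _ = ∑ j, (∑ i, πθ' i * (∑ a, θ' i a * p a i j)) * g j := by
                exact Finset.sum_congr rfl fun j _ => (Finset.sum_mul _ _ _).symm
            _ = ∑ j, πθ' j * g j := by
                exact Finset.sum_congr rfl fun j _ => by rw [hπθ'stat j]
  -- T2
  have hT2 : (∑ i, πθ' i * ∑ a, θ i a *
        ((∑ j, p a i j * g j) + r i a - β * (r i a - Jmu) ^ 2))
      = (∑ i, πθ' i * g i) + Jms := by
    have h1 : ∀ i, (∑ a, θ i a * ((∑ j, p a i j * g j) + r i a - β * (r i a - Jmu) ^ 2))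
        = g i + Jms := by
      intro i
      have hgi := hg i
      have hsplit : (∑ a, θ i a * ((∑ j, p a i j * g j) + r i a - β * (r i a - Jmu) ^ 2))
          = (∑ a, θ i a * ∑ j, p a i j * g j)
            + ∑ a, θ i a * (r i a - β * (r i a - Jmu) ^ 2) := by
        rw [← Finset.sum_add_distrib]
        exact Finset.sum_congr rfl fun a _ => by ring
      rw [hsplit, hswap θ i]
      linarith [hgi]
    calc (∑ i, πθ' i * ∑ a, θ i a *
            ((∑ j, p a i j * g j) + r i a - β * (r i a - Jmu) ^ 2))
        = ∑ i, (πθ' i * g i + πθ' i * Jms) := by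
          refine Finset.sum_congr rfl fun i _ => ?_
          rw [h1 i]; ring
      _ = (∑ i, πθ' i * g i) + (∑ i, πθ' i) * Jms := by
          rw [Finset.sum_add_distrib, Finset.sum_mul]
      _ = (∑ i, πθ' i * g i) + Jms := by rw [hπθ'1, one_mul]
  -- the main sum equals F - Jms
  have hinner : ∀ i, (∑ a, (θ' i a - θ i a) *
        ((∑ j, p a i j * g j) + r i a - β * (r i a) ^ 2 + 2 * β * Jmu * r i a))
      = (∑ a, θ' i a * ((∑ j, p a i j * g j) + r i a - β * (r i a - Jmu) ^ 2))
        - ∑ a, θ i a * ((∑ j, p a i j * g j) + r i a - β * (r i a - Jmu) ^ 2) := by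
    intro i
    have hz : (∑ a, (θ' i a - θ i a)) = 0 := by
      rw [Finset.sum_sub_distrib, hθ'1, hθ1]; ring
    calc (∑ a, (θ' i a - θ i a) *
            ((∑ j, p a i j * g j) + r i a - β * (r i a) ^ 2 + 2 * β * Jmu * r i a))
        = ∑ a, (θ' i a * ((∑ j, p a i j * g j) + r i a - β * (r i a - Jmu) ^ 2)
            - θ i a * ((∑ j, p a i j * g j) + r i a - β * (r i a - Jmu) ^ 2)
            + (θ' i a - θ i a) * (β * Jmu ^ 2)) := by
          exact Finset.sum_congr rfl fun a _ => by ring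
      _ = (∑ a, (θ' i a * ((∑ j, p a i j * g j) + r i a - β * (r i a - Jmu) ^ 2)
            - θ i a * ((∑ j, p a i j * g j) + r i a - β * (r i a - Jmu) ^ 2)))
            + (∑ a, (θ' i a - θ i a)) * (β * Jmu ^ 2) := by
          rw [Finset.sum_add_distrib, Finset.sum_mul]
      _ = (∑ a, θ' i a * ((∑ j, p a i j * g j) + r i a - β * (r i a - Jmu) ^ 2))
            - ∑ a, θ i a * ((∑ j, p a i j * g j) + r i a - β * (r i a - Jmu) ^ 2) := by
          rw [hz, Finset.sum_sub_distrib]; ring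
  have hsum : (∑ i, πθ' i * ∑ a, (θ' i a - θ i a) *
        ((∑ j, p a i j * g j) + r i a - β * (r i a) ^ 2 + 2 * β * Jmu * r i a))
      = (∑ i, πθ' i * ∑ a, θ' i a * (r i a - β * (r i a - Jmu) ^ 2)) - Jms := by
    calc (∑ i, πθ' i * ∑ a, (θ' i a - θ i a) *
            ((∑ j, p a i j * g j) + r i a - β * (r i a) ^ 2 + 2 * β * Jmu * r i a))
        = ∑ i, (πθ' i * (∑ a, θ' i a * ((∑ j, p a i j * g j) + r i a - β * (r i a - Jmu) ^ 2))
            - πθ' i * (∑ a, θ i a * ((∑ j, p a i j * g j) + r i a - β * (r i a - Jmu) ^ 2))) := by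
          refine Finset.sum_congr rfl fun i _ => ?_
          rw [hinner i]; ring
      _ = (∑ i, πθ' i * ∑ a, θ' i a * ((∑ j, p a i j * g j) + r i a - β * (r i a - Jmu) ^ 2))
            - ∑ i, πθ' i * ∑ a, θ i a * ((∑ j, p a i j * g j) + r i a - β * (r i a - Jmu) ^ 2) :=
          Finset.sum_sub_distrib _ _
      _ = (∑ i, πθ' i * ∑ a, θ' i a * (r i a - β * (r i a - Jmu) ^ 2)) - Jms := by
          rw [hT1, hT2]; ring
  -- shift of the mean in the variance term
  have hshift : Jms' = (∑ i, πθ' i * ∑ a, θ' i a * (r i a - β * (r i a - Jmu) ^ 2))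
      + β * (Jmu' - Jmu) ^ 2 := by
    have h1 : ∀ i, (∑ a, θ' i a * (r i a - β * (r i a - Jmu') ^ 2))
        = (∑ a, θ' i a * (r i a - β * (r i a - Jmu) ^ 2))
          + 2 * β * (Jmu' - Jmu) * (∑ a, θ' i a * r i a)
          + β * (Jmu ^ 2 - Jmu' ^ 2) * (∑ a, θ' i a) := by
      intro i
      rw [Finset.mul_sum, Finset.mul_sum, ← Finset.sum_add_distrib, ← Finset.sum_add_distrib]
      exact Finset.sum_congr rfl fun a _ => by ring
    calc Jms' = ∑ i, πθ' i * ∑ a, θ' i a * (r i a - β * (r i a - Jmu') ^ 2) := hJms'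
      _ = ∑ i, (πθ' i * (∑ a, θ' i a * (r i a - β * (r i a - Jmu) ^ 2))
            + 2 * β * (Jmu' - Jmu) * (πθ' i * ∑ a, θ' i a * r i a)
            + β * (Jmu ^ 2 - Jmu' ^ 2) * πθ' i) := by
          refine Finset.sum_congr rfl fun i _ => ?_
          rw [h1 i, hθ'1 i]; ring
      _ = (∑ i, πθ' i * ∑ a, θ' i a * (r i a - β * (r i a - Jmu) ^ 2))
            + 2 * β * (Jmu' - Jmu) * (∑ i, πθ' i * ∑ a, θ' i a * r i a)
            + β * (Jmu ^ 2 - Jmu' ^ 2) * (∑ i, πθ' i) := by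
          rw [Finset.sum_add_distrib, Finset.sum_add_distrib, ← Finset.mul_sum, ← Finset.mul_sum]
      _ = (∑ i, πθ' i * ∑ a, θ' i a * (r i a - β * (r i a - Jmu) ^ 2))
            + β * (Jmu' - Jmu) ^ 2 := by
          rw [← hJmu', hπθ'1]; ring
  linarith [hsum, hshift]
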